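/- Let G be a locally compact, second countable topological group, H < G a closed subgroup, and Γ < G a closed subgroup. Then the canonical projection map (H ∩ Γ)\H → Γ\G is proper if and only if the set ΓH is closed in G. -/

import Mathlib

open scoped Pointwise

/-- The canonical projection `(H ∩ Γ)\H → Γ\G` (written here with left cosets:
`H ⧸ (Γ ∩ H) → G ⧸ Γ`, sending `h(Γ∩H)` to `hΓ`). -/
def canonicalProj {G : Type*} [Group G] (H Γ : Subgroup G) :
    H ⧸ Γ.subgroupOf H → G ⧸ Γ :=
  Quotient.map' (fun h : H => (h : G))
    (fun a b hab => by
      rw [QuotientGroup.leftRel_apply] at hab ⊢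
      simpa [Subgroup.mem_subgroupOf] using hab)

section Aux

open MulAction

variable {G : Type*} [Group G] [TopologicalSpace G] [IsTopologicalGroup G]
  {H Γ : Subgroup G}

lemma canonicalProj_mk (H Γ : Subgroup G) (h : H) :
    canonicalProj H Γ (QuotientGroup.mk h) = QuotientGroup.mk (h : G) := rfl

lemma canonicalProj_continuous (H Γ : Subgroup G) : Continuous (canonicalProj H Γ) := by
  rw [(QuotientGroup.isQuotientMap_mk (Γ.subgroupOf H)).continuous_iff]
  exact QuotientGroup.continuous_mk.comp continuous_subtype_val

lemma canonicalProj_injective (H Γ : Subgroup G) :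
    Function.Injective (canonicalProj H Γ) := by
  intro a b
  induction a using Quotient.inductionOn' with | h a =>
  induction b using Quotient.inductionOn' with | h b =>
  intro hab
  rw [show (Quotient.mk'' a : H ⧸ Γ.subgroupOf H) = QuotientGroup.mk a from rfl,
    show (Quotient.mk'' b : H ⧸ Γ.subgroupOf H) = QuotientGroup.mk b from rfl,
    canonicalProj_mk, canonicalProj_mk, QuotientGroup.eq] at hab
  rw [show (Quotient.mk'' a : H ⧸ Γ.subgroupOf H) = QuotientGroup.mk a from rfl,
    show (Quotient.mk'' b : H ⧸ Γ.subgroupOf H) = QuotientGroup.mk b from rfl,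
    QuotientGroup.eq]
  simpa [Subgroup.mem_subgroupOf] using hab

lemma range_canonicalProj (H Γ : Subgroup G) :
    Set.range (canonicalProj H Γ) = QuotientGroup.mk '' (H : Set G) := by
  ext x
  constructor
  · rintro ⟨y, rfl⟩
    induction y using Quotient.inductionOn' with | h a =>
    exact ⟨a, a.2, rfl⟩
  · rintro ⟨g, hg, rfl⟩
    exact ⟨QuotientGroup.mk (⟨g, hg⟩ : H), rfl⟩

lemma t2_quotient (hΓ : IsClosed (Γ : Set G)) : T2Space (G ⧸ Γ) := by
  rw [t2_iff_isClosed_diagonal]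
  have hp : IsOpenQuotientMap
      (Prod.map (QuotientGroup.mk : G → G ⧸ Γ) QuotientGroup.mk) :=
    (QuotientGroup.isOpenQuotientMap_mk (N := Γ)).prodMap (QuotientGroup.isOpenQuotientMap_mk (N := Γ))
  rw [← hp.isQuotientMap.isClosed_preimage]
  have : Prod.map (QuotientGroup.mk : G → G ⧸ Γ) QuotientGroup.mk ⁻¹' Set.diagonal (G ⧸ Γ)
      = (fun p : G × G => p.1⁻¹ * p.2) ⁻¹' (Γ : Set G) := by
    ext ⟨a, b⟩
    simp [Set.mem_diagonal_iff, QuotientGroup.eq]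
  rw [this]
  exact hΓ.preimage (continuous_fst.inv.mul continuous_snd)

end Aux

/-- Let `G` be a locally compact, second countable topological group,
`H < G` a closed subgroup, and `Γ < G` a closed subgroup. Then the canonical
projection `(H ∩ Γ)\H → Γ\G` is proper if and only if `ΓH` (here `HΓ`, in the
left-coset convention) is closed in `G`. -/
theorem stmt_0 {G : Type*} [Group G] [TopologicalSpace G] [IsTopologicalGroup G]
    [LocallyCompactSpace G] [SecondCountableTopology G]
    (H Γ : Subgroup G) (hH : IsClosed (H : Set G)) (hΓ : IsClosed (Γ : Set G)) :
    IsProperMap (canonicalProj H Γ) ↔ IsClosed ((H : Set G) * (Γ : Set G)) := by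
  constructor
  · -- proper ⇒ HΓ closed
    intro hp
    have hrange : IsClosed (Set.range (canonicalProj H Γ)) :=
      hp.isClosedMap.isClosed_range
    rw [range_canonicalProj] at hrange
    have := hrange.preimage (QuotientGroup.continuous_mk (N := Γ))
    rwa [QuotientGroup.preimage_image_mk_eq_mul] at this
  · -- HΓ closed ⇒ proper
    intro hcl
    haveI : T2Space (G ⧸ Γ) := t2_quotient hΓ
    haveI : SecondCountableTopology ↥H :=
      Topology.IsEmbedding.subtypeVal.secondCountableTopology
    haveI : LocallyCompactSpace ↥H := hH.isClosedEmbedding_subtypeVal.locallyCompactSpace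
    haveI : SigmaCompactSpace ↥H := inferInstance
    set x₀ : G ⧸ Γ := ((1 : G) : G ⧸ Γ) with hx₀
    set X : Set (G ⧸ Γ) := MulAction.orbit ↥H x₀ with hX
    have hXeq : X = QuotientGroup.mk '' (H : Set G) := by
      ext x
      constructor
      · rintro ⟨h, rfl⟩
        exact ⟨h, h.2, by show _ = QuotientGroup.mk ((h:G) * 1); rw [mul_one]⟩
      · rintro ⟨g, hg, rfl⟩
        exact ⟨⟨g, hg⟩, by show QuotientGroup.mk (g * 1) = _; rw [mul_one]⟩
    have hXclosed : IsClosed X := by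
      rw [hXeq, ← (QuotientGroup.isQuotientMap_mk Γ).isClosed_preimage,
        QuotientGroup.preimage_image_mk_eq_mul]
      exact hcl
    haveI : LocallyCompactSpace ↥X := hXclosed.isClosedEmbedding_subtypeVal.locallyCompactSpace
    haveI : ContinuousSMul ↥H ↥X := by
      refine ⟨?_⟩
      rw [show (fun p : ↥H × ↥X => p.1 • p.2) = fun p : ↥H × ↥X =>
        (⟨p.1 • (p.2 : G ⧸ Γ), by
          rcases p.2.2 with ⟨h, hh⟩
          exact ⟨p.1 * h, by simp only [mul_smul, hh]⟩⟩ : ↥X) from funext fun p => Subtype.ext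
          MulAction.orbit.coe_smul]
      exact Continuous.subtype_mk
        ((continuous_subtype_val.comp continuous_fst).smul (continuous_subtype_val.comp continuous_snd)) _
    set x₀X : ↥X := ⟨x₀, MulAction.mem_orbit_self x₀⟩ with hx₀X
    set q : ↥H → ↥X := fun h => h • x₀X with hq
    have hq_open : IsOpenMap q := isOpenMap_smul_of_sigmaCompact x₀X
    have hq_surj : Function.Surjective q := fun x => MulAction.exists_smul_eq ↥H x₀X x
    have hq_val : ∀ h : ↥H, (q h : G ⧸ Γ) = QuotientGroup.mk (h : G) := by
      intro h
      have : (q h : G ⧸ Γ) = QuotientGroup.mk ((h : G) * 1) := rfl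
      rwa [mul_one] at this
    -- f is a closed map
    have hclosed_map : IsClosedMap (canonicalProj H Γ) := by
      intro C hC
      set A : Set ↥H := QuotientGroup.mk ⁻¹' C with hA
      have hA_closed : IsClosed A := hC.preimage QuotientGroup.continuous_mk
      have hsat : ∀ a b : ↥H, q a = q b → (a ∈ A ↔ b ∈ A) := by
        intro a b hab
        have h1 : (QuotientGroup.mk (a : G) : G ⧸ Γ) = QuotientGroup.mk (b : G) := by
          rw [← hq_val a, ← hq_val b, hab]
        rw [QuotientGroup.eq] at h1
        have h2 : (QuotientGroup.mk a : H ⧸ Γ.subgroupOf H) = QuotientGroup.mk b := by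
          rw [QuotientGroup.eq]
          simpa [Subgroup.mem_subgroupOf] using h1
        simp only [hA, Set.mem_preimage, h2]
      have himg : canonicalProj H Γ '' C = Subtype.val '' (q '' A) := by
        ext x
        constructor
        · rintro ⟨c, hc, rfl⟩
          induction c using Quotient.inductionOn' with | h a =>
          refine ⟨q a, ⟨a, hc, rfl⟩, ?_⟩
          rw [hq_val a]
          rfl
        · rintro ⟨-, ⟨a, ha, rfl⟩, rfl⟩
          exact ⟨QuotientGroup.mk a, ha, (hq_val a).symm⟩
      rw [himg]
      have hqA_closed : IsClosed (q '' A) := by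
        rw [← isOpen_compl_iff]
        have : (q '' A)ᶜ = q '' Aᶜ := by
          ext x
          constructor
          · intro hx
            obtain ⟨b, rfl⟩ := hq_surj x
            exact ⟨b, fun hb => hx ⟨b, hb, rfl⟩, rfl⟩
          · rintro ⟨b, hb, rfl⟩ ⟨a, ha, hab⟩
            exact hb ((hsat a b hab).mp ha)
        rw [this]
        exact hq_open _ hA_closed.isOpen_compl
      exact (hXclosed.isClosedEmbedding_subtypeVal.isClosedMap) _ hqA_closed
    exact isProperMap_of_isClosedMap_of_inj (canonicalProj_continuous H Γ)
      (canonicalProj_injective H Γ) hclosed_map
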